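/- Let G be a graph of girth at least 2l (all cycles have length at least 2l), and let u, v be a pair of vertices with at least 4l^2 internally disjoint-endpoint paths of length l between them (paths with l edges from u to v). Then for any set X of at most 4l vertices, there exists a path P of length l from u to v whose internal vertices avoid X. -/

import Mathlib

open SimpleGraph

/-- If `s(a, b) ∈ p.edges` for a path `p : G.Walk a b`, then `p` is the single edge. -/
private lemma path_eq_single_edge {V : Type*} {G : SimpleGraph V} {a b : V}
    (p : G.Walk a b) (hp : p.IsPath) (hab : a ≠ b) (he : s(a, b) ∈ p.edges) :
    p.length = 1 := by
  cases p with
  | nil => simp at he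
  | cons h₁ p₁ =>
    rw [SimpleGraph.Walk.cons_isPath_iff] at hp
    rw [SimpleGraph.Walk.edges_cons, List.mem_cons] at he
    rcases he with he | he
    · have hx := (Sym2.congr_right).mp he.symm
      subst hx
      have := SimpleGraph.Walk.isPath_iff_eq_nil.mp hp.1
      subst this
      simp
    · exact absurd (SimpleGraph.Walk.fst_mem_support_of_mem_edges p₁ he) hp.2

/-- Two distinct paths between the same endpoints yield a cycle of length at most the sum
of their lengths. -/
private lemma exists_cycle_of_ne_paths {V : Type*} {G : SimpleGraph V} :
    ∀ (n : ℕ) ⦃a b : V⦄ (p q : G.Walk a b), p.IsPath → q.IsPath →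
      p.length + q.length ≤ n →
      p = q ∨ ∃ (x : V) (c : G.Walk x x), c.IsCycle ∧ c.length ≤ p.length + q.length := by
  intro n
  induction n with
  | zero =>
    intro a b p q hp hq hn
    have hp0 : p.length = 0 := by omega
    have hab : a = b := SimpleGraph.Walk.eq_of_length_eq_zero hp0
    subst hab
    left
    rw [(SimpleGraph.Walk.isPath_iff_eq_nil (p := p)).mp hp, (SimpleGraph.Walk.isPath_iff_eq_nil (p := q)).mp hq]
  | succ n ih =>
    intro a b p q hp hq hn
    classical
    by_cases hpq : p = q
    · exact Or.inl hpq
    right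
    have hab : a ≠ b := by
      rintro rfl
      exact hpq (((SimpleGraph.Walk.isPath_iff_eq_nil (p := p)).mp hp).trans
        ((SimpleGraph.Walk.isPath_iff_eq_nil (p := q)).mp hq).symm)
    by_cases hz : ∃ z, z ∈ p.support ∧ z ∈ q.support ∧ z ≠ a ∧ z ≠ b
    · obtain ⟨z, hzp, hzq, hza, hzb⟩ := hz
      have h1 : (p.takeUntil z hzp).length + (p.dropUntil z hzp).length = p.length := by
        rw [← SimpleGraph.Walk.length_append, SimpleGraph.Walk.take_spec]
      have h2 : (q.takeUntil z hzq).length + (q.dropUntil z hzq).length = q.length := by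
        rw [← SimpleGraph.Walk.length_append, SimpleGraph.Walk.take_spec]
      have t1 : 1 ≤ (p.takeUntil z hzp).length := by
        rcases Nat.eq_zero_or_pos (p.takeUntil z hzp).length with h | h
        · exact absurd (SimpleGraph.Walk.eq_of_length_eq_zero h).symm hza
        · exact h
      have t2 : 1 ≤ (q.takeUntil z hzq).length := by
        rcases Nat.eq_zero_or_pos (q.takeUntil z hzq).length with h | h
        · exact absurd (SimpleGraph.Walk.eq_of_length_eq_zero h).symm hza
        · exact h
      have d1 : 1 ≤ (p.dropUntil z hzp).length := by
        rcases Nat.eq_zero_or_pos (p.dropUntil z hzp).length with h | h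
        · exact absurd (SimpleGraph.Walk.eq_of_length_eq_zero h) hzb
        · exact h
      have d2 : 1 ≤ (q.dropUntil z hzq).length := by
        rcases Nat.eq_zero_or_pos (q.dropUntil z hzq).length with h | h
        · exact absurd (SimpleGraph.Walk.eq_of_length_eq_zero h) hzb
        · exact h
      rcases ih (p.takeUntil z hzp) (q.takeUntil z hzq) (hp.takeUntil hzp) (hq.takeUntil hzq)
          (by omega) with he | ⟨x, c, hc, hcl⟩
      · rcases ih (p.dropUntil z hzp) (q.dropUntil z hzq) (hp.dropUntil hzp) (hq.dropUntil hzq)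
            (by omega) with he' | ⟨x, c, hc, hcl⟩
        · exact absurd (by
            rw [← SimpleGraph.Walk.take_spec p hzp, he, he', SimpleGraph.Walk.take_spec]) hpq
        · exact ⟨x, c, hc, by omega⟩
      · exact ⟨x, c, hc, by omega⟩
    · push_neg at hz
      cases q with
      | nil => exact absurd rfl hab
      | @cons _ y _ hadj q' =>
        rw [SimpleGraph.Walk.cons_isPath_iff] at hq
        obtain ⟨hq', hay⟩ := hq
        have hbp : b ∉ p.reverse.support.tail := by
          have := hp.reverse.support_nodup
          rw [SimpleGraph.Walk.support_eq_cons p.reverse, List.nodup_cons] at this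
          exact this.1
        have hpath : (q'.append p.reverse).IsPath := by
          rw [SimpleGraph.Walk.isPath_def, SimpleGraph.Walk.support_append, List.nodup_append]
          refine ⟨hq'.support_nodup, hp.reverse.support_nodup.tail, ?_⟩
          intro w hw1 w' hw2 hww'
          subst hww'
          have hwp : w ∈ p.support := by
            have : w ∈ p.reverse.support := List.tail_subset _ hw2
            rwa [SimpleGraph.Walk.support_reverse, List.mem_reverse] at this
          have hwq : w ∈ (SimpleGraph.Walk.cons hadj q').support := by
            rw [SimpleGraph.Walk.support_cons]
            exact List.mem_cons_of_mem _ hw1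
          have hwa : w ≠ a := fun h => hay (h ▸ hw1)
          have hwb : w = b := hz w hwp hwq hwa
          exact hbp (hwb ▸ hw2)
        have hedge : s(a, y) ∉ (q'.append p.reverse).edges := by
          intro he
          rw [SimpleGraph.Walk.edges_append, List.mem_append] at he
          rcases he with he | he
          · exact hay (SimpleGraph.Walk.fst_mem_support_of_mem_edges q' he)
          · rw [SimpleGraph.Walk.edges_reverse, List.mem_reverse] at he
            have hyp : y ∈ p.support := SimpleGraph.Walk.snd_mem_support_of_mem_edges p he
            have hyq : y ∈ (SimpleGraph.Walk.cons hadj q').support := by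
              rw [SimpleGraph.Walk.support_cons]
              exact List.mem_cons_of_mem _ q'.start_mem_support
            have hyb : y = b := hz y hyp hyq hadj.ne'
            subst hyb
            have hq'nil := (SimpleGraph.Walk.isPath_iff_eq_nil (p := q')).mp hq'
            subst hq'nil
            have hp1 : p.length = 1 := path_eq_single_edge p hp hab he
            cases p with
            | nil => simp at hp1
            | cons h₂ p₂ =>
              rw [SimpleGraph.Walk.length_cons] at hp1
              have hp2 : p₂.length = 0 := by omega
              have hxb := SimpleGraph.Walk.eq_of_length_eq_zero hp2
              subst hxb
              have : p₂ = SimpleGraph.Walk.nil := by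
                cases p₂ with
                | nil => rfl
                | cons _ _ => simp at hp2
              subst this
              exact hpq rfl
        refine ⟨a, SimpleGraph.Walk.cons hadj (q'.append p.reverse), ?_, ?_⟩
        · rw [SimpleGraph.Walk.cons_isCycle_iff]
          exact ⟨hpath, hedge⟩
        · simp only [SimpleGraph.Walk.length_cons, SimpleGraph.Walk.length_append,
            SimpleGraph.Walk.length_reverse]
          omega

private lemma length_takeUntil_congr {V : Type*} [DecidableEq V] {G : SimpleGraph V} {a b : V}
    (w : G.Walk a b) {z z' : V} (h : z = z') (hz : z ∈ w.support) (hz' : z' ∈ w.support) :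
    (w.takeUntil z hz).length = (w.takeUntil z' hz').length := by
  subst h; rfl

/-- Let `G` have girth at least `2l` (`l ≥ 2`) and let `u, v` be vertices with at least
`4l²` paths of length `l` between them. Then for any set `X` of at most `4l` vertices,
there is a path of length `l` from `u` to `v` whose internal vertices avoid `X`. -/
theorem stmt_10 {V : Type*} (G : SimpleGraph V) (l : ℕ) (hl : 2 ≤ l)
    (hgirth : ∀ (v : V) (w : G.Walk v v), w.IsCycle → 2 * l ≤ w.length)
    (u v : V)
    (hfat : 4 * l ^ 2 ≤ Nat.card {p : G.Walk u v // p.IsPath ∧ p.length = l})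
    (X : Set V) (hXfin : X.Finite) (hX : X.ncard ≤ 4 * l) :
    ∃ p : G.Walk u v, p.IsPath ∧ p.length = l ∧
      ∀ x ∈ X, x ∈ p.support → x = u ∨ x = v := by
  classical
  have hl2 : 16 ≤ 4 * l ^ 2 := by nlinarith
  by_contra hcon
  push_neg at hcon
  -- uniqueness of short paths
  have huniq : ∀ {a b : V} (p q : G.Walk a b), p.IsPath → q.IsPath →
      p.length + q.length < 2 * l → p = q := by
    intro a b p q hp hq hlen
    rcases exists_cycle_of_ne_paths (p.length + q.length) p q hp hq le_rfl with h | ⟨x, c, hc, hcl⟩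
    · exact h
    · exact absurd (hgirth x c hc) (by omega)
  -- key: a path of length l is determined by an internal vertex and its position
  have key : ∀ (w w' : G.Walk u v), w.IsPath → w'.IsPath → w.length = l → w'.length = l →
      ∀ z (hz : z ∈ w.support) (hz' : z ∈ w'.support), z ≠ u → z ≠ v →
      (w.takeUntil z hz).length = (w'.takeUntil z hz').length → w = w' := by
    intro w w' hw hw' hwl hwl' z hz hz' hzu hzv hlen
    have h1 : (w.takeUntil z hz).length + (w.dropUntil z hz).length = l := by
      rw [← SimpleGraph.Walk.length_append, SimpleGraph.Walk.take_spec, hwl]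
    have h2 : (w'.takeUntil z hz').length + (w'.dropUntil z hz').length = l := by
      rw [← SimpleGraph.Walk.length_append, SimpleGraph.Walk.take_spec, hwl']
    have t1 : 1 ≤ (w.takeUntil z hz).length := by
      rcases Nat.eq_zero_or_pos (w.takeUntil z hz).length with h | h
      · exact absurd (SimpleGraph.Walk.eq_of_length_eq_zero h).symm hzu
      · exact h
    have d1 : 1 ≤ (w.dropUntil z hz).length := by
      rcases Nat.eq_zero_or_pos (w.dropUntil z hz).length with h | h
      · exact absurd (SimpleGraph.Walk.eq_of_length_eq_zero h) hzv
      · exact h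
    have e1 : w.takeUntil z hz = w'.takeUntil z hz' :=
      huniq _ _ (hw.takeUntil hz) (hw'.takeUntil hz') (by omega)
    have e2 : w.dropUntil z hz = w'.dropUntil z hz' :=
      huniq _ _ (hw.dropUntil hz) (hw'.dropUntil hz') (by omega)
    rw [← SimpleGraph.Walk.take_spec w hz, e1, e2, SimpleGraph.Walk.take_spec]
  set T := {p : G.Walk u v // p.IsPath ∧ p.length = l} with hT
  have hTfin : Finite T := by
    by_contra h
    rw [not_finite_iff_infinite] at h
    rw [Nat.card_eq_zero_of_infinite] at hfat
    omega
  have hXsub : Finite ↥X := hXfin.to_subtype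
  -- choose a bad internal vertex for each path
  choose x hxX hxsup hxuv using fun t : T => hcon t.1 t.2.1 t.2.2
  have hxu : ∀ t : T, x t ≠ u := fun t => (hxuv t).1
  have hxv : ∀ t : T, x t ≠ v := fun t => (hxuv t).2
  have hbound : ∀ t : T, 1 ≤ (t.1.takeUntil (x t) (hxsup t)).length ∧
      (t.1.takeUntil (x t) (hxsup t)).length ≤ l - 1 := by
    intro t
    have h1 : (t.1.takeUntil (x t) (hxsup t)).length +
        (t.1.dropUntil (x t) (hxsup t)).length = l := by
      rw [← SimpleGraph.Walk.length_append, SimpleGraph.Walk.take_spec, t.2.2]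
    have t1 : 1 ≤ (t.1.takeUntil (x t) (hxsup t)).length := by
      rcases Nat.eq_zero_or_pos (t.1.takeUntil (x t) (hxsup t)).length with h | h
      · exact absurd (SimpleGraph.Walk.eq_of_length_eq_zero h).symm (hxu t)
      · exact h
    have d1 : 1 ≤ (t.1.dropUntil (x t) (hxsup t)).length := by
      rcases Nat.eq_zero_or_pos (t.1.dropUntil (x t) (hxsup t)).length with h | h
      · exact absurd (SimpleGraph.Walk.eq_of_length_eq_zero h) (hxv t)
      · exact h
    omega
  -- injection into X × Fin (l - 1)
  let f : T → ↥X × Fin (l - 1) := fun t =>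
    (⟨x t, hxX t⟩, ⟨(t.1.takeUntil (x t) (hxsup t)).length - 1, by
      have := hbound t; omega⟩)
  have hinj : Function.Injective f := by
    intro s t hst
    have h1 : x s = x t := congrArg (fun z => (z.1 : V)) hst
    have h2 : (s.1.takeUntil (x s) (hxsup s)).length - 1 =
        (t.1.takeUntil (x t) (hxsup t)).length - 1 := congrArg (fun z => (z.2 : ℕ)) hst
    have hbs := hbound s
    have hbt := hbound t
    have hz' : x s ∈ t.1.support := h1 ▸ hxsup t
    have hlen' : (t.1.takeUntil (x s) hz').length = (t.1.takeUntil (x t) (hxsup t)).length :=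
      length_takeUntil_congr t.1 h1 hz' (hxsup t)
    apply Subtype.ext
    exact key s.1 t.1 s.2.1 t.2.1 s.2.2 t.2.2 (x s) (hxsup s) hz' (hxu s) (hxv s)
      (by omega)
  have hcard : Nat.card T ≤ Nat.card (↥X × Fin (l - 1)) :=
    Nat.card_le_card_of_injective f hinj
  have hfin : Nat.card (Fin (l - 1)) = l - 1 :=
    Nat.card_eq_fintype_card.trans (Fintype.card_fin _)
  rw [Nat.card_prod, hfin, Nat.card_coe_set_eq] at hcard
  have : X.ncard * (l - 1) ≤ 4 * l * (l - 1) := Nat.mul_le_mul_right _ hX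
  have hlt : 4 * l * (l - 1) < 4 * l ^ 2 := by nlinarith [Nat.sub_lt (by omega : 0 < l) one_pos]
  omega
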